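/- Assume κ'(1) < 1 and Assumption A. Then for every t ∈ [-1,1], the limit 𝔏(t) := lim_{L→∞} (κ'(1))^{-L}·(1 − κ_L(t)) satisfies: 𝔏(t) = 0 if and only if κ(t) = 1 (i.e., if and only if t ∈ I(κ)). -/

import Mathlib

open Filter Topology Set Asymptotics

set_option maxHeartbeats 1000000

private lemma aux_upper (a : ℕ → ℝ) (κ : ℝ → ℝ)
    (ha : ∀ q, 0 ≤ a q) (hsum : HasSum a 1)
    (hder : Summable fun q : ℕ => (q : ℝ) * a q)
    (hκ : ∀ t ∈ Icc (-1 : ℝ) 1, HasSum (fun q => a q * t ^ q) (κ t))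
    {s : ℝ} (hs : s ∈ Icc (-1:ℝ) 1) :
    1 - κ s ≤ (∑' q : ℕ, (q : ℝ) * a q) * (1 - s) := by
  have h2 : HasSum (fun q => a q - a q * s ^ q) (1 - κ s) := hsum.sub (hκ s hs)
  have h3 : HasSum (fun q : ℕ => (q:ℝ) * a q * (1 - s)) ((∑' q : ℕ, (q : ℝ) * a q) * (1 - s)) :=
    hder.hasSum.mul_right _
  refine hasSum_le (fun q => ?_) h2 h3
  have hs1 : |s| ≤ 1 := abs_le.2 ⟨hs.1, hs.2⟩
  have h1s : (0:ℝ) ≤ 1 - s := by linarith [hs.2]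
  have hgeom : 1 - s ^ q = (∑ i ∈ Finset.range q, s ^ i) * (1 - s) := by
    have := geom_sum_mul s q
    nlinarith [this]
  have hsum_le : (∑ i ∈ Finset.range q, s ^ i) ≤ (q : ℝ) := by
    calc (∑ i ∈ Finset.range q, s ^ i) ≤ ∑ i ∈ Finset.range q, (1:ℝ) := by
          refine Finset.sum_le_sum fun i _ => ?_
          calc s ^ i ≤ |s ^ i| := le_abs_self _
          _ = |s| ^ i := abs_pow s i
          _ ≤ 1 := pow_le_one₀ (abs_nonneg s) hs1
      _ = q := by simp
  have heq : a q - a q * s ^ q = a q * ((∑ i ∈ Finset.range q, s ^ i) * (1 - s)) := by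
    rw [← hgeom]; ring
  rw [heq]
  calc a q * ((∑ i ∈ Finset.range q, s ^ i) * (1 - s)) ≤ a q * ((q:ℝ) * (1-s)) := by
        apply mul_le_mul_of_nonneg_left _ (ha q)
        exact mul_le_mul_of_nonneg_right hsum_le h1s
    _ = (q:ℝ) * a q * (1 - s) := by ring

private lemma aux_eq_one (a : ℕ → ℝ) (κ : ℝ → ℝ)
    (ha : ∀ q, 0 ≤ a q) (hsum : HasSum a 1)
    (hinf : {q | a q ≠ 0}.Infinite)
    (hκ : ∀ t ∈ Icc (-1 : ℝ) 1, HasSum (fun q => a q * t ^ q) (κ t))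
    {s : ℝ} (hs : s ∈ Icc (-1:ℝ) 1) (h1 : κ s = 1) :
    s = 1 ∨ s = -1 := by
  have h2 : HasSum (fun q => a q - a q * s ^ q) 0 := by
    have := hsum.sub (hκ s hs); rwa [h1, sub_self] at this
  have hs1 : |s| ≤ 1 := abs_le.2 ⟨hs.1, hs.2⟩
  have hnn : ∀ q, 0 ≤ a q - a q * s ^ q := by
    intro q
    have : a q * s ^ q ≤ a q * 1 := by
      apply mul_le_mul_of_nonneg_left _ (ha q)
      calc s ^ q ≤ |s ^ q| := le_abs_self _
        _ = |s| ^ q := abs_pow s q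
        _ ≤ 1 := pow_le_one₀ (abs_nonneg s) hs1
    linarith [this]
  have hzero : ∀ q, a q - a q * s ^ q = 0 := fun q =>
    congrFun ((hasSum_zero_iff_of_nonneg hnn).mp h2) q
  obtain ⟨q0, hq0⟩ := (hinf.diff (Set.finite_singleton 0)).nonempty
  have hq0ne : a q0 ≠ 0 := hq0.1
  have hq0pos : q0 ≠ 0 := hq0.2
  have hsq : s ^ q0 = 1 := by
    have h5 := hzero q0
    have h6 : a q0 * (1 - s ^ q0) = 0 := by linarith [h5]
    rcases mul_eq_zero.mp h6 with h|h
    · exact absurd h hq0ne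
    · linarith [h]
  have habs : |s| = 1 := by
    have habs' : |s| ^ q0 = 1 := by rw [← abs_pow, hsq, abs_one]
    rcases lt_trichotomy |s| 1 with h'|h'|h'
    · have := pow_lt_one₀ (abs_nonneg s) h' hq0pos; linarith
    · exact h'
    · have := one_lt_pow₀ h' hq0pos; linarith
  rcases (abs_eq (by norm_num : (0:ℝ) ≤ 1)).mp habs with h|h
  · left; exact h
  · right; exact h

private lemma aux_neg_one (a : ℕ → ℝ) (κ : ℝ → ℝ)
    (ha : ∀ q, 0 ≤ a q) (hsum : HasSum a 1)
    (hκ : ∀ t ∈ Icc (-1 : ℝ) 1, HasSum (fun q => a q * t ^ q) (κ t))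
    {u : ℝ} (hu : u ∈ Icc (-1:ℝ) 1) (h1 : κ u = -1) :
    κ (-1) = -1 := by
  have h2 : HasSum (fun q => a q + a q * u ^ q) 0 := by
    have := hsum.add (hκ u hu); rw [h1] at this; simpa using this
  have hu1 : |u| ≤ 1 := abs_le.2 ⟨hu.1, hu.2⟩
  have hnn : ∀ q, 0 ≤ a q + a q * u ^ q := by
    intro q
    have : a q * (-1) ≤ a q * u ^ q := by
      apply mul_le_mul_of_nonneg_left _ (ha q)
      calc (-1:ℝ) ≤ -|u ^ q| := by
            rw [abs_pow]; simp [pow_le_one₀ (abs_nonneg u) hu1]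
        _ ≤ u ^ q := neg_abs_le _
    linarith [this]
  have hzero' : ∀ q, a q + a q * u ^ q = 0 := fun q =>
    congrFun ((hasSum_zero_iff_of_nonneg hnn).mp h2) q
  have hkey : ∀ q : ℕ, a q * (-1:ℝ) ^ q = -(a q) := by
    intro q
    by_cases hq : a q = 0
    · simp [hq]
    · have huq : u ^ q = -1 := by
        have h5 := hzero' q
        have h3 : a q * (1 + u ^ q) = 0 := by linarith [h5]
        rcases mul_eq_zero.mp h3 with h|h
        · exact absurd h hq
        · linarith [h]
      have hodd : Odd q := by
        rw [← Nat.not_even_iff_odd]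
        intro he
        have := he.pow_nonneg (a := u)
        rw [huq] at this; linarith
      rw [hodd.neg_one_pow]; ring
  have h4 : HasSum (fun q => a q * (-1:ℝ) ^ q) (-1) := by
    have := hsum.neg
    simpa [hkey] using this
  exact (hκ (-1) (by constructor <;> norm_num)).unique h4

private lemma aux_bound (κ : ℝ → ℝ) (m c ρ : ℝ) (hc : c ≠ 0)
    (hA : (fun t : ℝ => (1 - κ t) - (m * (1 - t) - c * (1 - t) ^ ρ))
        =o[𝓝[<] (1 : ℝ)] fun t : ℝ => (1 - t) ^ ρ) :
    ∃ l < (1:ℝ), ∀ s, l < s → s < 1 →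
      m * (1 - s) - (2 * |c|) * (1 - s) ^ ρ ≤ 1 - κ s := by
  have hb := hA.bound (abs_pos.2 hc)
  rw [eventually_iff] at hb
  obtain ⟨l, hl, hsub⟩ := mem_nhdsLT_iff_exists_Ioo_subset.mp hb
  refine ⟨l, hl, fun s h1 h2 => ?_⟩
  have hmem := hsub ⟨h1, h2⟩
  simp only [Set.mem_setOf_eq, Real.norm_eq_abs] at hmem
  have hpos : (0:ℝ) ≤ (1 - s) ^ ρ := Real.rpow_nonneg (by linarith) ρ
  rw [abs_of_nonneg hpos] at hmem
  have h3 := abs_le.mp hmem |>.1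
  have h4 : -c * (1-s)^ρ ≥ -(|c| * (1-s)^ρ) := by
    have : c * (1-s)^ρ ≤ |c| * (1-s)^ρ := mul_le_mul_of_nonneg_right (le_abs_self c) hpos
    linarith
  nlinarith [h3, h4]

theorem low_disorder_limit_vanishes_iff
    (a : ℕ → ℝ) (κ : ℝ → ℝ)
    (ha : ∀ q, 0 ≤ a q)
    (hsum : HasSum a 1)
    (hinf : {q | a q ≠ 0}.Infinite)
    (hder : Summable fun q : ℕ => (q : ℝ) * a q)
    (hκ : ∀ t ∈ Icc (-1 : ℝ) 1, HasSum (fun q => a q * t ^ q) (κ t))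
    (hmap : MapsTo κ (Icc (-1 : ℝ) 1) (Icc (-1 : ℝ) 1))
    (hk1 : (∑' q : ℕ, (q : ℝ) * a q) < 1)
    (hA : ∃ c : ℝ, c ≠ 0 ∧ ∃ ρ : ℝ, 1 < ρ ∧
      (fun t : ℝ => (1 - κ t) - ((∑' q : ℕ, (q : ℝ) * a q) * (1 - t) - c * (1 - t) ^ ρ))
        =o[𝓝[<] (1 : ℝ)] fun t : ℝ => (1 - t) ^ ρ) :
    ∀ t ∈ Icc (-1 : ℝ) 1, ∀ ℓ : ℝ,
      Tendsto (fun L : ℕ => (1 - κ^[L] t) / (∑' q : ℕ, (q : ℝ) * a q) ^ L) atTop (𝓝 ℓ) →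
      (ℓ = 0 ↔ κ t = 1) := by
  obtain ⟨c, hc, ρ, hρ, hAo⟩ := hA
  intro t ht ℓ hℓ
  set m := ∑' q : ℕ, (q : ℝ) * a q with hm
  have hκ1 : κ 1 = 1 := by
    have h1 := hκ 1 (by constructor <;> norm_num)
    simp only [one_pow, mul_one] at h1
    exact h1.unique hsum
  by_cases h1 : κ t = 1
  · -- limit is zero
    have hx : ∀ L : ℕ, κ^[L + 1] t = 1 := fun L => by
      rw [Function.iterate_succ_apply, h1, Function.iterate_fixed hκ1]
    have h0 : Tendsto (fun L : ℕ => (1 - κ^[L] t) / m ^ L) atTop (𝓝 0) := by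
      apply Tendsto.congr' _ (tendsto_const_nhds (x := (0:ℝ)))
      filter_upwards [eventually_ge_atTop 1] with L hL
      obtain ⟨k, rfl⟩ := Nat.exists_eq_add_of_le hL
      rw [add_comm 1 k, hx k]
      simp
    have := tendsto_nhds_unique hℓ h0
    simp [this, h1]
  · -- κ t < 1 ; show ℓ > 0
    have hmem := hmap ht
    have hκt : κ t < 1 := lt_of_le_of_ne hmem.2 h1
    -- basic positivity of m
    obtain ⟨q0, hq0⟩ := (hinf.diff (Set.finite_singleton 0)).nonempty
    have mpos : 0 < m := by
      have hle : (q0:ℝ) * a q0 ≤ m :=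
        Summable.le_tsum hder q0 (fun j _ => mul_nonneg (Nat.cast_nonneg j) (ha j))
      have : 0 < (q0:ℝ) * a q0 := by
        have haq : 0 < a q0 := lt_of_le_of_ne (ha q0) (Ne.symm hq0.1)
        have hq1 : (1:ℝ) ≤ (q0:ℝ) := by
          exact_mod_cast Nat.one_le_iff_ne_zero.mpr hq0.2
        nlinarith
      linarith
    have hIcc : ∀ L, κ^[L] t ∈ Icc (-1:ℝ) 1 := by
      intro L; induction L with
      | zero => simpa using ht
      | succ L ih => rw [Function.iterate_succ_apply']; exact hmap ih
    have hlt1 : ∀ L, κ^[L] t < 1 := by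
      intro L
      induction L with
      | zero =>
        simp only [Function.iterate_zero_apply]
        rcases lt_or_eq_of_le ht.2 with h|h
        · exact h
        · exfalso; rw [h, hκ1] at h1; exact h1 rfl
      | succ L ih =>
        rw [Function.iterate_succ_apply']
        rcases lt_or_eq_of_le (hmap (hIcc L)).2 with h|h
        · exact h
        · exfalso
          rcases aux_eq_one a κ ha hsum hinf hκ (hIcc L) h with he|he
          · exact (ne_of_lt ih) he
          · -- κ^[L] t = -1
            cases L with
            | zero =>
              simp only [Function.iterate_zero_apply] at h
              exact h1 h
            | succ L' =>
              have he' : κ (κ^[L'] t) = -1 := by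
                rw [← Function.iterate_succ_apply' κ L' t]; exact he
              have hneg : κ (-1) = -1 := aux_neg_one a κ ha hsum hκ (hIcc L') he'
              rw [he, hneg] at h
              norm_num at h
    -- quantitative lower bound
    set x : ℕ → ℝ := fun L => 1 - κ^[L] t with hxdef
    have hxpos : ∀ L, 0 < x L := fun L => by simp only [hxdef]; linarith [hlt1 L]
    have hdec : ∀ L, x (L+1) ≤ m * x L := by
      intro L
      simp only [hxdef, Function.iterate_succ_apply']
      exact aux_upper a κ ha hsum hder hκ (hIcc L)
    have hgeo : ∀ L k, x (L + k) ≤ x L * m ^ k := by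
      intro L k
      induction k with
      | zero => simp
      | succ k ih =>
        have h5 := hdec (L + k)
        calc x (L + (k+1)) = x ((L + k) + 1) := by ring_nf
          _ ≤ m * x (L + k) := h5
          _ ≤ m * (x L * m ^ k) := mul_le_mul_of_nonneg_left ih mpos.le
          _ = x L * m ^ (k+1) := by ring
    have hx0 : Tendsto x atTop (𝓝 0) := by
      apply squeeze_zero (fun L => (hxpos L).le) (fun L => by simpa using hgeo 0 L)
      have := (tendsto_pow_atTop_nhds_zero_of_lt_one mpos.le hk1).const_mul (x 0)
      simpa using this
    set C : ℝ := 2 * |c| with hCdef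
    have hCpos : 0 < C := by
      have : 0 < |c| := abs_pos.2 hc
      rw [hCdef]; linarith
    set r : ℝ := m ^ (ρ - 1) with hrdef
    have hr0 : 0 < r := Real.rpow_pos_of_pos mpos _
    have hr1 : r < 1 := Real.rpow_lt_one mpos.le hk1 (by linarith)
    obtain ⟨l, hl, hbound⟩ := aux_bound κ m c ρ hc hAo
    have hxr : Tendsto (fun L => x L ^ (ρ-1)) atTop (𝓝 0) := by
      have hcont : ContinuousAt (fun u : ℝ => u ^ (ρ-1)) 0 :=
        Real.continuousAt_rpow_const 0 (ρ-1) (Or.inr (by linarith))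
      have := hcont.tendsto.comp hx0
      simpa [Function.comp_def, Real.zero_rpow (by linarith : ρ - 1 ≠ 0)] using this
    have hev1 : ∀ᶠ L in atTop, x L < 1 - l :=
      hx0.eventually (eventually_lt_nhds (by linarith : (0:ℝ) < 1 - l))
    have hev2 : ∀ᶠ L in atTop, x L ^ (ρ-1) < m * (1 - r) / (2 * C) :=
      hxr.eventually (eventually_lt_nhds (div_pos (by nlinarith) (by linarith)))
    obtain ⟨L0, hL0a, hL0b⟩ := (hev1.and hev2).exists
    set B : ℝ := C / m * x L0 ^ (ρ - 1) with hBdef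
    have hxL0rpow : (0:ℝ) ≤ x L0 ^ (ρ - 1) := Real.rpow_nonneg (hxpos L0).le _
    have hB0 : 0 ≤ B := by
      rw [hBdef]; exact mul_nonneg (div_nonneg hCpos.le mpos.le) hxL0rpow
    have hB2 : B ≤ (1 - r) / 2 := by
      have h5 : x L0 ^ (ρ-1) ≤ m * (1 - r) / (2 * C) := hL0b.le
      rw [hBdef]
      rw [div_mul_eq_mul_div, div_le_div_iff₀ mpos (by norm_num : (0:ℝ) < 2)]
      have h6 := mul_le_mul_of_nonneg_left h5 hCpos.le
      have h7 : C * (m * (1-r) / (2*C)) = (1-r) * m / 2 := by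
        field_simp
      nlinarith [h6, h7]
    have hS : ∀ k : ℕ, B * ∑ i ∈ Finset.range k, r ^ i ≤ 1 / 2 := by
      intro k
      have hsum_le : ∑ i ∈ Finset.range k, r ^ i ≤ (1 - r)⁻¹ :=
        (tsum_geometric_of_lt_one hr0.le hr1) ▸ Summable.sum_le_tsum (Finset.range k)
          (fun i _ => pow_nonneg hr0.le i) (summable_geometric_of_lt_one hr0.le hr1)
      have hsnn : 0 ≤ ∑ i ∈ Finset.range k, r ^ i :=
        Finset.sum_nonneg fun i _ => pow_nonneg hr0.le i
      calc B * ∑ i ∈ Finset.range k, r ^ i ≤ ((1-r)/2) * (1-r)⁻¹ :=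
            mul_le_mul hB2 hsum_le hsnn (by linarith)
        _ = 1 / 2 := by
            rw [div_mul_eq_mul_div, mul_inv_cancel₀ (by linarith : (1:ℝ) - r ≠ 0)]
    have hrk : ∀ k : ℕ, (m ^ k) ^ (ρ - 1) = r ^ k := by
      intro k
      rw [hrdef, ← Real.rpow_natCast m k, ← Real.rpow_mul mpos.le, mul_comm,
        Real.rpow_mul mpos.le, Real.rpow_natCast]
    have key : ∀ k : ℕ,
        x L0 * m ^ k * (1 - B * ∑ i ∈ Finset.range k, r ^ i) ≤ x (L0 + k) := by
      intro k
      induction k with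
      | zero => simp
      | succ k ih =>
        have hxk := hxpos (L0 + k)
        have hxle : x (L0 + k) ≤ x L0 * m ^ k := hgeo L0 k
        have hxleL0 : x (L0 + k) ≤ x L0 := by
          calc x (L0 + k) ≤ x L0 * m ^ k := hxle
            _ ≤ x L0 * 1 := mul_le_mul_of_nonneg_left
                (pow_le_one₀ mpos.le hk1.le) (hxpos L0).le
            _ = x L0 := mul_one _
        have hsgt : l < κ^[L0 + k] t := by
          have h5 : x (L0 + k) < 1 - l := lt_of_le_of_lt hxleL0 hL0a
          simp only [hxdef] at h5; linarith
        have hslt : κ^[L0 + k] t < 1 := hlt1 _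
        have hb := hbound (κ^[L0+k] t) hsgt hslt
        rw [← hCdef] at hb
        have hxeq : (1 : ℝ) - κ^[L0+k] t = x (L0+k) := rfl
        have hxsucc : (1 : ℝ) - κ (κ^[L0+k] t) = x (L0+k+1) := by
          simp only [hxdef, Function.iterate_succ_apply']
        rw [hxeq, hxsucc] at hb
        have hrpow : x (L0+k) ^ ρ = x (L0+k) ^ (ρ-1) * x (L0+k) := by
          have h := Real.rpow_add hxk (ρ-1) 1
          rw [Real.rpow_one] at h
          rw [show ρ - 1 + 1 = ρ by ring] at h
          exact h
        have hmono : x (L0+k) ^ (ρ-1) ≤ x L0 ^ (ρ-1) * r ^ k := by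
          calc x (L0+k) ^ (ρ-1) ≤ (x L0 * m ^ k) ^ (ρ-1) :=
                Real.rpow_le_rpow hxk.le hxle (by linarith)
            _ = x L0 ^ (ρ-1) * (m ^ k) ^ (ρ-1) :=
                Real.mul_rpow (hxpos L0).le (pow_nonneg mpos.le k)
            _ = x L0 ^ (ρ-1) * r ^ k := by rw [hrk k]
        have hstep : (m - C * (x L0 ^ (ρ-1) * r ^ k)) * x (L0+k) ≤ x (L0+k+1) := by
          have h7 := mul_le_mul_of_nonneg_right hmono hxk.le
          have h6 : C * x (L0+k) ^ ρ ≤ C * (x L0 ^ (ρ-1) * r ^ k) * x (L0+k) := by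
            rw [hrpow]
            calc C * (x (L0+k) ^ (ρ-1) * x (L0+k))
                ≤ C * (x L0 ^ (ρ-1) * r ^ k * x (L0+k)) :=
                  mul_le_mul_of_nonneg_left h7 hCpos.le
              _ = C * (x L0 ^ (ρ-1) * r ^ k) * x (L0+k) := by ring
          nlinarith [hb, h6]
        have hcoef : m - C * (x L0 ^ (ρ-1) * r ^ k) = m * (1 - B * r ^ k) := by
          have hm0 : m ≠ 0 := mpos.ne'
          rw [hBdef]
          field_simp
        have hBrk : B * r ^ k ≤ 1 / 2 := by
          have h8 : B * r ^ k ≤ B * 1 := mul_le_mul_of_nonneg_left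
            (pow_le_one₀ hr0.le hr1.le) hB0
          rw [mul_one] at h8
          linarith [hB2]
        have hco_nn : 0 ≤ m * (1 - B * r ^ k) :=
          mul_nonneg mpos.le (by linarith [hBrk])
        have hSk := hS k
        have hSk_nn : 0 ≤ B * ∑ i ∈ Finset.range k, r ^ i :=
          mul_nonneg hB0 (Finset.sum_nonneg fun i _ => pow_nonneg hr0.le i)
        have hrk_nn : (0:ℝ) ≤ B * r ^ k := mul_nonneg hB0 (pow_nonneg hr0.le k)
        calc x L0 * m ^ (k+1) * (1 - B * ∑ i ∈ Finset.range (k+1), r ^ i)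
            ≤ m * (1 - B * r ^ k) * (x L0 * m ^ k * (1 - B * ∑ i ∈ Finset.range k, r ^ i)) := by
              rw [Finset.sum_range_succ]
              have hnn : 0 ≤ x L0 * m ^ k :=
                mul_nonneg (hxpos L0).le (pow_nonneg mpos.le k)
              have hid : m * (1 - B * r ^ k) *
                    (x L0 * m ^ k * (1 - B * ∑ i ∈ Finset.range k, r ^ i))
                  = x L0 * m ^ (k+1) * (1 - B * (∑ i ∈ Finset.range k, r ^ i + r ^ k))
                    + m * (x L0 * m ^ k) * (B * r ^ k)
                      * (B * ∑ i ∈ Finset.range k, r ^ i) := by ring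
              rw [hid]
              have hextra : 0 ≤ m * (x L0 * m ^ k) * (B * r ^ k)
                  * (B * ∑ i ∈ Finset.range k, r ^ i) :=
                mul_nonneg (mul_nonneg (mul_nonneg mpos.le hnn) hrk_nn) hSk_nn
              linarith [hextra]
          _ ≤ m * (1 - B * r ^ k) * x (L0 + k) := mul_le_mul_of_nonneg_left ih hco_nn
          _ = (m - C * (x L0 ^ (ρ-1) * r ^ k)) * x (L0+k) := by rw [hcoef]
          _ ≤ x (L0+k+1) := hstep
    have hfinal : ∀ᶠ L in atTop, x L0 / m ^ L0 * (1/2) ≤ x L / m ^ L := by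
      filter_upwards [eventually_ge_atTop L0] with L hL
      obtain ⟨k, rfl⟩ := Nat.exists_eq_add_of_le hL
      have h7 := key k
      have h8 : x L0 * m ^ k * (1/2) ≤ x (L0 + k) := by
        have h9 : (1:ℝ)/2 ≤ 1 - B * ∑ i ∈ Finset.range k, r ^ i := by linarith [hS k]
        calc x L0 * m ^ k * (1/2) ≤ x L0 * m ^ k * (1 - B * ∑ i ∈ Finset.range k, r ^ i) := by
              exact mul_le_mul_of_nonneg_left h9
                (mul_nonneg (hxpos L0).le (pow_nonneg mpos.le k))
          _ ≤ x (L0 + k) := h7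
      have hmL0 : (0:ℝ) < m ^ L0 := pow_pos mpos L0
      have hmk : (0:ℝ) < m ^ k := pow_pos mpos k
      rw [pow_add, div_mul_eq_mul_div,
        div_le_div_iff₀ hmL0 (mul_pos hmL0 hmk)]
      nlinarith [mul_le_mul_of_nonneg_right h8 hmL0.le]
    have hge : x L0 / m ^ L0 * (1/2) ≤ ℓ := ge_of_tendsto hℓ hfinal
    have hpos0 : 0 < x L0 / m ^ L0 * (1/2) := by
      have h10 := hxpos L0
      have hmL0 : (0:ℝ) < m ^ L0 := pow_pos mpos L0
      have := div_pos h10 hmL0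
      linarith
    constructor
    · intro h0; exfalso; rw [h0] at hge; linarith
    · intro h0; exact absurd h0 h1
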